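/- arXiv:1912.03674 — 2 statements merged into one kernel-verified Lean document; each statement's English description precedes it below -/
import Mathlib

section
/- For every integer n ≥ 1 and every pattern pair p ∈ {(001,010), (001,011), (001,012)}, the number of inversion sequences of length n avoiding both patterns of p equals n, i.e. |I_n(p)| = n. -/
set_option linter.unnecessarySeqFocus false

/-- An inversion sequence of length `n` (0-indexed): `e i ≤ i` for all `i`. -/
def InvSeq {n : ℕ} (e : Fin n → ℕ) : Prop := ∀ i : Fin n, e i ≤ (i : ℕ)

/-- `e` contains the pattern `p` (a word of nonnegative integers): there is a
strictly increasing choice of positions on which `e` is order-isomorphic to `p`. -/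
def Contains {n : ℕ} (e : Fin n → ℕ) (p : List ℕ) : Prop :=
  ∃ s : Fin p.length → Fin n, StrictMono s ∧
    ∀ a b : Fin p.length,
      (p.get a < p.get b ↔ e (s a) < e (s b)) ∧
      (p.get a = p.get b ↔ e (s a) = e (s b))

/-- `e` avoids the pattern `p`. -/
def Avoids {n : ℕ} (e : Fin n → ℕ) (p : List ℕ) : Prop := ¬ Contains e p

/-- The number of zero entries of `e`. -/
def zeroStat {n : ℕ} (e : Fin n → ℕ) : ℕ :=
  (Finset.univ.filter (fun i : Fin n => e i = 0)).card

/-- The number of distinct positive values among the entries of `e`. -/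
def distStat {n : ℕ} (e : Fin n → ℕ) : ℕ :=
  ((Finset.univ.image e).filter (fun v => 0 < v)).card

/-- The number of repeated entries of `e`: `n - dist e`. -/
def repStat {n : ℕ} (e : Fin n → ℕ) : ℕ := n - distStat e

/-- The number of saturated entries of `e` (1-indexed: `e_i = i - 1`). -/
def satuStat {n : ℕ} (e : Fin n → ℕ) : ℕ :=
  (Finset.univ.filter (fun i : Fin n => e i = (i : ℕ))).card

section helpers

variable {n : ℕ}

lemma contains001_iff (e : Fin n → ℕ) :
    Contains e [0,0,1] ↔ ∃ i j k : Fin n, i < j ∧ j < k ∧ e i = e j ∧ e j < e k := by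
  constructor
  · rintro ⟨s, hs, h⟩
    refine ⟨s ⟨0, by norm_num⟩, s ⟨1, by norm_num⟩, s ⟨2, by norm_num⟩,
      hs (by decide), hs (by decide), ?_, ?_⟩
    · exact (h ⟨0, by norm_num⟩ ⟨1, by norm_num⟩).2.mp rfl
    · exact (h ⟨1, by norm_num⟩ ⟨2, by norm_num⟩).1.mp (by norm_num)
  · rintro ⟨i, j, k, hij, hjk, h1, h2⟩
    refine ⟨![i,j,k], ?_, ?_⟩
    · intro a b hab
      fin_cases a <;> fin_cases b <;> simp_all <;> omega
    · intro a b
      fin_cases a <;> fin_cases b <;> simp_all <;> omega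

lemma contains010_iff (e : Fin n → ℕ) :
    Contains e [0,1,0] ↔ ∃ i j k : Fin n, i < j ∧ j < k ∧ e i < e j ∧ e i = e k := by
  constructor
  · rintro ⟨s, hs, h⟩
    refine ⟨s ⟨0, by norm_num⟩, s ⟨1, by norm_num⟩, s ⟨2, by norm_num⟩,
      hs (by decide), hs (by decide), ?_, ?_⟩
    · exact (h ⟨0, by norm_num⟩ ⟨1, by norm_num⟩).1.mp (by norm_num)
    · exact (h ⟨0, by norm_num⟩ ⟨2, by norm_num⟩).2.mp rfl
  · rintro ⟨i, j, k, hij, hjk, h1, h2⟩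
    refine ⟨![i,j,k], ?_, ?_⟩
    · intro a b hab
      fin_cases a <;> fin_cases b <;> simp_all <;> omega
    · intro a b
      fin_cases a <;> fin_cases b <;> simp_all <;> omega

lemma contains011_iff (e : Fin n → ℕ) :
    Contains e [0,1,1] ↔ ∃ i j k : Fin n, i < j ∧ j < k ∧ e i < e j ∧ e j = e k := by
  constructor
  · rintro ⟨s, hs, h⟩
    refine ⟨s ⟨0, by norm_num⟩, s ⟨1, by norm_num⟩, s ⟨2, by norm_num⟩,
      hs (by decide), hs (by decide), ?_, ?_⟩
    · exact (h ⟨0, by norm_num⟩ ⟨1, by norm_num⟩).1.mp (by norm_num)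
    · exact (h ⟨1, by norm_num⟩ ⟨2, by norm_num⟩).2.mp rfl
  · rintro ⟨i, j, k, hij, hjk, h1, h2⟩
    refine ⟨![i,j,k], ?_, ?_⟩
    · intro a b hab
      fin_cases a <;> fin_cases b <;> simp_all <;> omega
    · intro a b
      fin_cases a <;> fin_cases b <;> simp_all <;> omega

lemma contains012_iff (e : Fin n → ℕ) :
    Contains e [0,1,2] ↔ ∃ i j k : Fin n, i < j ∧ j < k ∧ e i < e j ∧ e j < e k := by
  constructor
  · rintro ⟨s, hs, h⟩
    refine ⟨s ⟨0, by norm_num⟩, s ⟨1, by norm_num⟩, s ⟨2, by norm_num⟩,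
      hs (by decide), hs (by decide), ?_, ?_⟩
    · exact (h ⟨0, by norm_num⟩ ⟨1, by norm_num⟩).1.mp (by norm_num)
    · exact (h ⟨1, by norm_num⟩ ⟨2, by norm_num⟩).1.mp (by norm_num)
  · rintro ⟨i, j, k, hij, hjk, h1, h2⟩
    refine ⟨![i,j,k], ?_, ?_⟩
    · intro a b hab
      fin_cases a <;> fin_cases b <;> simp_all <;> omega
    · intro a b
      fin_cases a <;> fin_cases b <;> simp_all <;> omega

/-- Classification for the pair (001, 010). -/
lemma class010 (hn : 1 ≤ n) (e : Fin n → ℕ) (he : InvSeq e)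
    (h1 : ∀ i j k : Fin n, i < j → j < k → e i = e j → ¬ e j < e k)
    (h2 : ∀ i j k : Fin n, i < j → j < k → e i < e j → e i ≠ e k) :
    ∃ m : Fin n, ∀ i : Fin n, e i = min (i : ℕ) (m : ℕ) := by
  by_cases hall : ∀ i : Fin n, e i = (i : ℕ)
  · refine ⟨⟨n - 1, by omega⟩, fun i => ?_⟩
    have := i.isLt
    rw [hall i]
    simp only
    omega
  · push_neg at hall
    classical
    set S : Finset (Fin n) := Finset.univ.filter (fun i => e i ≠ (i : ℕ)) with hSdef
    have hS : S.Nonempty := by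
      obtain ⟨i, hi⟩ := hall; exact ⟨i, by simp [hSdef, hi]⟩
    set j := S.min' hS with hjdef
    have hjS : e j ≠ (j : ℕ) := by
      have := S.min'_mem hS; simpa [hSdef] using this
    have hmin : ∀ i : Fin n, (i : ℕ) < (j : ℕ) → e i = (i : ℕ) := by
      intro i hi
      by_contra hne
      have : j ≤ i := S.min'_le i (by simp [hSdef, hne])
      exact absurd hi (by simpa using not_lt.mpr this)
    have hj0 : 0 < (j : ℕ) := by
      rcases Nat.eq_zero_or_pos (j : ℕ) with h | h
      · exact absurd (by have := he j; omega : e j = (j : ℕ)) hjS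
        -- e j ≤ j = 0
      · exact h
    have hjlt : e j < (j : ℕ) := lt_of_le_of_ne (he j) hjS
    have hej : e j = (j : ℕ) - 1 := by
      by_contra hne
      have hv : e j < (j : ℕ) - 1 := by omega
      have hjn := j.isLt
      set v : Fin n := ⟨e j, lt_trans hjlt j.isLt⟩ with hvdef
      set w : Fin n := ⟨(j : ℕ) - 1, by omega⟩ with hwdef
      have hev : e v = e j := by
        have := hmin v (by simp [hvdef]; omega)
        simpa [hvdef] using this
      have hew : e w = (j : ℕ) - 1 := by
        have := hmin w (by simp [hwdef]; omega)
        simpa [hwdef] using this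
      exact h2 v w j (by simp [Fin.lt_def, hvdef, hwdef]; omega)
        (by simp [Fin.lt_def, hwdef]; omega) (by omega) hev
    -- everything at or after j equals j - 1
    have hafter : ∀ i : Fin n, (j : ℕ) ≤ (i : ℕ) → e i = (j : ℕ) - 1 := by
      intro i hji
      rcases eq_or_lt_of_le hji with heq | hlt
      · have : j = i := Fin.ext heq
        rw [← this, hej]
      · have hjn := j.isLt
        set w : Fin n := ⟨(j : ℕ) - 1, by omega⟩ with hwdef
        have hew : e w = (j : ℕ) - 1 := by
          have := hmin w (by simp [hwdef]; omega)
          simpa [hwdef] using this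
        rcases lt_trichotomy (e i) ((j : ℕ) - 1) with h | h | h
        · -- pattern 010 : v, w, i
          set v : Fin n := ⟨e i, by omega⟩ with hvdef
          have hev : e v = e i := by
            have := hmin v (by simp [hvdef]; omega)
            simpa [hvdef] using this
          exact absurd hev (h2 v w i (by simp [Fin.lt_def, hvdef, hwdef]; omega)
            (by simp [Fin.lt_def, hwdef]; omega) (by rw [hev, hew]; omega))
        · exact h
        · -- pattern 001 : w, j, i
          exact absurd (by omega : e j < e i)
            (h1 w j i (by simp [Fin.lt_def, hwdef]; omega) (Fin.lt_def.mpr hlt)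
              (by rw [hew, hej]))
    refine ⟨⟨(j : ℕ) - 1, by have := j.isLt; omega⟩, fun i => ?_⟩
    simp only
    by_cases hij : (i : ℕ) < (j : ℕ)
    · rw [hmin i hij]; omega
    · rw [hafter i (by omega)]; omega

/-- Classification for the pair (001, 011). -/
lemma class011 (hn : 1 ≤ n) (e : Fin n → ℕ) (he : InvSeq e)
    (h1 : ∀ i j k : Fin n, i < j → j < k → e i = e j → ¬ e j < e k)
    (h2 : ∀ i j k : Fin n, i < j → j < k → e i < e j → e j ≠ e k) :
    ∃ m : Fin n, ∀ i : Fin n, e i = if (i : ℕ) ≤ (m : ℕ) then (i : ℕ) else 0 := by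
  by_cases hall : ∀ i : Fin n, e i = (i : ℕ)
  · refine ⟨⟨n - 1, by omega⟩, fun i => ?_⟩
    have := i.isLt
    rw [hall i]
    simp only
    rw [if_pos (by omega)]
  · push_neg at hall
    classical
    set S : Finset (Fin n) := Finset.univ.filter (fun i => e i ≠ (i : ℕ)) with hSdef
    have hS : S.Nonempty := by
      obtain ⟨i, hi⟩ := hall; exact ⟨i, by simp [hSdef, hi]⟩
    set j := S.min' hS with hjdef
    have hjS : e j ≠ (j : ℕ) := by
      have := S.min'_mem hS; simpa [hSdef] using this
    have hmin : ∀ i : Fin n, (i : ℕ) < (j : ℕ) → e i = (i : ℕ) := by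
      intro i hi
      by_contra hne
      have : j ≤ i := S.min'_le i (by simp [hSdef, hne])
      exact absurd hi (by simpa using not_lt.mpr this)
    have hj0 : 0 < (j : ℕ) := by
      rcases Nat.eq_zero_or_pos (j : ℕ) with h | h
      · exact absurd (by have := he j; omega : e j = (j : ℕ)) hjS
      · exact h
    have hjn := j.isLt
    have hjlt : e j < (j : ℕ) := lt_of_le_of_ne (he j) hjS
    set z : Fin n := ⟨0, by omega⟩ with hzdef
    have hez : e z = 0 := Nat.le_zero.mp (he z)
    have hej : e j = 0 := by
      by_contra hne
      have hv : 0 < e j := by omega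
      set v : Fin n := ⟨e j, lt_trans hjlt j.isLt⟩ with hvdef
      have hev : e v = e j := by
        have := hmin v (by simp [hvdef]; omega)
        simpa [hvdef] using this
      exact h2 z v j (by simp [Fin.lt_def, hzdef, hvdef]; omega)
        (by simp [Fin.lt_def, hvdef]; omega) (by rw [hez, hev]; omega) hev
    have hafter : ∀ i : Fin n, (j : ℕ) ≤ (i : ℕ) → e i = 0 := by
      intro i hji
      rcases eq_or_lt_of_le hji with heq | hlt
      · rw [← Fin.ext heq, hej]
      · by_contra hne
        exact h1 z j i (by simp [Fin.lt_def, hzdef]; omega)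
          (Fin.lt_def.mpr hlt) (by rw [hez, hej]) (by omega)
    refine ⟨⟨(j : ℕ) - 1, by omega⟩, fun i => ?_⟩
    simp only
    by_cases hij : (i : ℕ) < (j : ℕ)
    · rw [hmin i hij, if_pos (by omega)]
    · rw [hafter i (by omega), if_neg (by omega)]

/-- Classification for the pair (001, 012). -/
lemma class012 (hn : 1 ≤ n) (e : Fin n → ℕ) (he : InvSeq e)
    (h1 : ∀ i j k : Fin n, i < j → j < k → e i = e j → ¬ e j < e k)
    (h2 : ∀ i j k : Fin n, i < j → j < k → e i < e j → ¬ e j < e k) :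
    ∃ m : Fin n, ∀ i : Fin n,
      e i = if 1 ≤ (i : ℕ) ∧ (i : ℕ) ≤ (m : ℕ) then 1 else 0 := by
  classical
  have hz0 : ∀ i : Fin n, (i : ℕ) = 0 → e i = 0 := by
    intro i hi
    have := he i
    omega
  have hb : ∀ k : Fin n, e k ≤ 1 := by
    intro k
    by_contra hk
    push_neg at hk
    have hk2 : 2 ≤ (k : ℕ) := le_trans hk (he k)
    have hkn := k.isLt
    set z : Fin n := ⟨0, by omega⟩ with hzdef
    set o : Fin n := ⟨1, by omega⟩ with hodef
    have hez : e z = 0 := Nat.le_zero.mp (he z)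
    have heo : e o ≤ 1 := he o
    rcases Nat.le_one_iff_eq_zero_or_eq_one.mp heo with h | h
    · exact h1 z o k (by simp [Fin.lt_def, hzdef, hodef]) (by simp [Fin.lt_def, hodef]; omega)
        (by rw [hez, h]) (by omega)
    · exact h2 z o k (by simp [Fin.lt_def, hzdef, hodef]) (by simp [Fin.lt_def, hodef]; omega)
        (by rw [hez, h]; omega) (by omega)
  by_cases hall : ∀ i : Fin n, 1 ≤ (i : ℕ) → e i = 1
  · refine ⟨⟨n - 1, by omega⟩, fun i => ?_⟩
    have := i.isLt
    simp only
    by_cases hi : 1 ≤ (i : ℕ)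
    · rw [hall i hi, if_pos (by omega)]
    · rw [hz0 i (by omega), if_neg (by omega)]
  · push_neg at hall
    set S : Finset (Fin n) := Finset.univ.filter (fun i => 1 ≤ (i : ℕ) ∧ e i = 0) with hSdef
    have hS : S.Nonempty := by
      obtain ⟨i, hi1, hi2⟩ := hall
      exact ⟨i, by simp [hSdef, hi1]; have := hb i; omega⟩
    set j := S.min' hS with hjdef
    have hjS : 1 ≤ (j : ℕ) ∧ e j = 0 := by
      have := S.min'_mem hS; simpa [hSdef] using this
    have hmin : ∀ i : Fin n, 1 ≤ (i : ℕ) → (i : ℕ) < (j : ℕ) → e i = 1 := by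
      intro i hi1 hi
      by_contra hne
      have hi0 : e i = 0 := by have := hb i; omega
      have : j ≤ i := S.min'_le i (by simp [hSdef, hi1, hi0])
      exact absurd hi (by simpa using not_lt.mpr this)
    have hjn := j.isLt
    set z : Fin n := ⟨0, by omega⟩ with hzdef
    have hez : e z = 0 := Nat.le_zero.mp (he z)
    have hafter : ∀ i : Fin n, (j : ℕ) ≤ (i : ℕ) → e i = 0 := by
      intro i hji
      rcases eq_or_lt_of_le hji with heq | hlt
      · rw [← Fin.ext heq, hjS.2]
      · by_contra hne
        exact h1 z j i (by simp [Fin.lt_def, hzdef]; omega)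
          (Fin.lt_def.mpr hlt) (by rw [hez, hjS.2]) (by omega)
    refine ⟨⟨(j : ℕ) - 1, by omega⟩, fun i => ?_⟩
    simp only
    by_cases hi1 : 1 ≤ (i : ℕ)
    · by_cases hij : (i : ℕ) < (j : ℕ)
      · rw [hmin i hi1 hij, if_pos (by omega)]
      · rw [hafter i (by omega), if_neg (by omega)]
    · rw [hz0 i (by omega), if_neg (by omega)]

end helpers


section cards

variable {n : ℕ}

lemma card010 (hn : 1 ≤ n) :
    Nat.card {e : Fin n → ℕ // InvSeq e ∧ Avoids e [0,0,1] ∧ Avoids e [0,1,0]} = n := by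
  classical
  set f : Fin n → {e : Fin n → ℕ // InvSeq e ∧ Avoids e [0,0,1] ∧ Avoids e [0,1,0]} :=
    fun m => ⟨fun i => min (i : ℕ) (m : ℕ), fun i => min_le_left _ _, by
      intro h
      rw [contains001_iff] at h
      obtain ⟨i, j, k, hij, hjk, h1, h2⟩ := h
      rw [Fin.lt_def] at hij hjk
      omega, by
      intro h
      rw [contains010_iff] at h
      obtain ⟨i, j, k, hij, hjk, h1, h2⟩ := h
      rw [Fin.lt_def] at hij hjk
      omega⟩ with hfdef
  have hf : Function.Bijective f := by
    constructor
    · intro a b hab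
      have h := congrArg Subtype.val hab
      have h1 := congrFun h a
      have h2 := congrFun h b
      simp only [hfdef] at h1 h2
      exact Fin.ext (by omega)
    · rintro ⟨e, he, ha, hb⟩
      rw [Avoids, contains001_iff] at ha
      rw [Avoids, contains010_iff] at hb
      obtain ⟨m, hm⟩ := class010 hn e he
        (fun i j k a b c d => ha ⟨i, j, k, a, b, c, d⟩)
        (fun i j k a b c d => hb ⟨i, j, k, a, b, c, d⟩)
      exact ⟨m, Subtype.ext (funext fun i => (hm i).symm)⟩
  rw [← Nat.card_eq_of_bijective f hf, Nat.card_eq_fintype_card, Fintype.card_fin]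

lemma card011 (hn : 1 ≤ n) :
    Nat.card {e : Fin n → ℕ // InvSeq e ∧ Avoids e [0,0,1] ∧ Avoids e [0,1,1]} = n := by
  classical
  set f : Fin n → {e : Fin n → ℕ // InvSeq e ∧ Avoids e [0,0,1] ∧ Avoids e [0,1,1]} :=
    fun m => ⟨fun i => if (i : ℕ) ≤ (m : ℕ) then (i : ℕ) else 0, fun i => by
      simp only
      split_ifs <;> omega, by
      intro h
      rw [contains001_iff] at h
      obtain ⟨i, j, k, hij, hjk, h1, h2⟩ := h
      rw [Fin.lt_def] at hij hjk
      split_ifs at h1 h2 <;> omega, by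
      intro h
      rw [contains011_iff] at h
      obtain ⟨i, j, k, hij, hjk, h1, h2⟩ := h
      rw [Fin.lt_def] at hij hjk
      split_ifs at h1 h2 <;> omega⟩ with hfdef
  have hf : Function.Bijective f := by
    constructor
    · intro a b hab
      have h := congrArg Subtype.val hab
      have h1 := congrFun h a
      have h2 := congrFun h b
      simp only [hfdef] at h1 h2
      split_ifs at h1 h2 <;> exact Fin.ext (by omega)
    · rintro ⟨e, he, ha, hb⟩
      rw [Avoids, contains001_iff] at ha
      rw [Avoids, contains011_iff] at hb
      obtain ⟨m, hm⟩ := class011 hn e he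
        (fun i j k a b c d => ha ⟨i, j, k, a, b, c, d⟩)
        (fun i j k a b c d => hb ⟨i, j, k, a, b, c, d⟩)
      exact ⟨m, Subtype.ext (funext fun i => (hm i).symm)⟩
  rw [← Nat.card_eq_of_bijective f hf, Nat.card_eq_fintype_card, Fintype.card_fin]

lemma card012 (hn : 1 ≤ n) :
    Nat.card {e : Fin n → ℕ // InvSeq e ∧ Avoids e [0,0,1] ∧ Avoids e [0,1,2]} = n := by
  classical
  set f : Fin n → {e : Fin n → ℕ // InvSeq e ∧ Avoids e [0,0,1] ∧ Avoids e [0,1,2]} :=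
    fun m => ⟨fun i => if 1 ≤ (i : ℕ) ∧ (i : ℕ) ≤ (m : ℕ) then 1 else 0, fun i => by
      simp only
      split_ifs <;> omega, by
      intro h
      rw [contains001_iff] at h
      obtain ⟨i, j, k, hij, hjk, h1, h2⟩ := h
      rw [Fin.lt_def] at hij hjk
      split_ifs at h1 h2 <;> omega, by
      intro h
      rw [contains012_iff] at h
      obtain ⟨i, j, k, hij, hjk, h1, h2⟩ := h
      rw [Fin.lt_def] at hij hjk
      split_ifs at h1 h2 <;> omega⟩ with hfdef
  have hf : Function.Bijective f := by
    constructor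
    · intro a b hab
      have h := congrArg Subtype.val hab
      have h1 := congrFun h a
      have h2 := congrFun h b
      simp only [hfdef] at h1 h2
      split_ifs at h1 h2 <;> exact Fin.ext (by omega)
    · rintro ⟨e, he, ha, hb⟩
      rw [Avoids, contains001_iff] at ha
      rw [Avoids, contains012_iff] at hb
      obtain ⟨m, hm⟩ := class012 hn e he
        (fun i j k a b c d => ha ⟨i, j, k, a, b, c, d⟩)
        (fun i j k a b c d => hb ⟨i, j, k, a, b, c, d⟩)
      exact ⟨m, Subtype.ext (funext fun i => (hm i).symm)⟩
  rw [← Nat.card_eq_of_bijective f hf, Nat.card_eq_fintype_card, Fintype.card_fin]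

end cards

theorem stmt_0 (n : ℕ) (hn : 1 ≤ n) (p q : List ℕ)
    (hpq : (p, q) = ([0,0,1], [0,1,0]) ∨ (p, q) = ([0,0,1], [0,1,1]) ∨
           (p, q) = ([0,0,1], [0,1,2])) :
    Nat.card {e : Fin n → ℕ // InvSeq e ∧ Avoids e p ∧ Avoids e q} = n := by
  rcases hpq with h | h | h <;> simp only [Prod.mk.injEq] at h <;>
    obtain ⟨rfl, rfl⟩ := h
  · exact card010 hn
  · exact card011 hn
  · exact card012 hn
end

section
/- For every integer n ≥ 1 and every pattern pair p ∈ {(001,110), (001,021), (001,120)}, the number of inversion sequences of length n avoiding both patterns of p equals the n-th central polygonal (lazy caterer) number: |I_n(p)| = n(n−1)/2 + 1. -/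
lemma contains_three {n : ℕ} (e : Fin n → ℕ) (x y z : ℕ) :
    Contains e [x, y, z] ↔
      ∃ i j k : Fin n, i < j ∧ j < k ∧
        ((x < y ↔ e i < e j) ∧ (x = y ↔ e i = e j) ∧
         (x < z ↔ e i < e k) ∧ (x = z ↔ e i = e k) ∧
         (y < z ↔ e j < e k) ∧ (y = z ↔ e j = e k)) := by
  have hget : ∀ a : Fin ([x, y, z].length),
      [x, y, z].get a = if (a : ℕ) = 0 then x else if (a : ℕ) = 1 then y else z := by
    rintro ⟨a, ha⟩
    simp only [List.length_cons, List.length_nil] at ha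
    interval_cases a <;> rfl
  constructor
  · rintro ⟨s, hs, h⟩
    refine ⟨s ⟨0, by simp⟩, s ⟨1, by simp⟩, s ⟨2, by simp⟩,
      hs (by simp [Fin.mk_lt_mk]), hs (by simp [Fin.mk_lt_mk]), ?_⟩
    have h01 := h ⟨0, by simp⟩ ⟨1, by simp⟩
    have h02 := h ⟨0, by simp⟩ ⟨2, by simp⟩
    have h12 := h ⟨1, by simp⟩ ⟨2, by simp⟩
    rw [hget, hget] at h01 h02 h12
    norm_num at h01 h02 h12
    exact ⟨h01.1, h01.2, h02.1, h02.2, h12.1, h12.2⟩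
  · rintro ⟨i, j, k, hij, hjk, h1, h2, h3, h4, h5, h6⟩
    rw [Fin.lt_def] at hij hjk
    refine ⟨fun a => if (a : ℕ) = 0 then i else if (a : ℕ) = 1 then j else k, ?_, ?_⟩
    · rintro ⟨a, ha⟩ ⟨b, hb⟩ hab
      simp only [List.length_cons, List.length_nil] at ha hb
      rw [Fin.lt_def] at hab ⊢
      simp only at hab ⊢
      split_ifs <;> omega
    · intro a b
      rw [hget a, hget b]
      have ha := a.isLt; have hb := b.isLt
      simp only [List.length_cons, List.length_nil] at ha hb
      simp only []
      split_ifs <;> constructor <;> omega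

lemma avoids001_iff {n : ℕ} (e : Fin n → ℕ) :
    Avoids e [0,0,1] ↔ ∀ i j k : Fin n, i < j → j < k → e i = e j → e k ≤ e i := by
  rw [Avoids, contains_three]
  constructor
  · intro h i j k hij hjk he
    by_contra hlt
    exact h ⟨i, j, k, hij, hjk, by omega⟩
  · rintro h ⟨i, j, k, hij, hjk, H⟩
    have := h i j k hij hjk (by omega)
    omega

lemma avoids110_iff {n : ℕ} (e : Fin n → ℕ) :
    Avoids e [1,1,0] ↔ ∀ i j k : Fin n, i < j → j < k → e i = e j → e i ≤ e k := by
  rw [Avoids, contains_three]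
  constructor
  · intro h i j k hij hjk he
    by_contra hlt
    exact h ⟨i, j, k, hij, hjk, by omega⟩
  · rintro h ⟨i, j, k, hij, hjk, H⟩
    have := h i j k hij hjk (by omega)
    omega

lemma avoids021_iff {n : ℕ} (e : Fin n → ℕ) :
    Avoids e [0,2,1] ↔ ∀ i j k : Fin n, i < j → j < k → e i < e k → e j ≤ e k := by
  rw [Avoids, contains_three]
  constructor
  · intro h i j k hij hjk he
    by_contra hlt
    exact h ⟨i, j, k, hij, hjk, by omega⟩
  · rintro h ⟨i, j, k, hij, hjk, H⟩
    have := h i j k hij hjk (by omega)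
    omega

lemma avoids120_iff {n : ℕ} (e : Fin n → ℕ) :
    Avoids e [1,2,0] ↔ ∀ i j k : Fin n, i < j → j < k → e k < e i → e j ≤ e i := by
  rw [Avoids, contains_three]
  constructor
  · intro h i j k hij hjk he
    by_contra hlt
    exact h ⟨i, j, k, hij, hjk, by omega⟩
  · rintro h ⟨i, j, k, hij, hjk, H⟩
    have := h i j k hij hjk (by omega)
    omega

/-- The canonical family: identity prefix of length `m`, then `a` copies of `m-1`, then `c`. -/
def GSeq (n m a c : ℕ) : Fin n → ℕ :=
  fun i => if (i : ℕ) < m then i else if (i : ℕ) < m + a then m - 1 else c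

lemma GSeq_inv {n m a c : ℕ} (hc : c < m) : InvSeq (GSeq n m a c) := by
  intro i
  simp only [GSeq]
  split_ifs <;> omega

lemma GSeq_av001 {n m a c : ℕ} (hc : c < m) : Avoids (GSeq n m a c) [0,0,1] := by
  rw [avoids001_iff]
  intro i j k hij hjk hE
  rw [Fin.lt_def] at hij hjk
  simp only [GSeq] at hE ⊢
  split_ifs at hE ⊢ <;> omega

lemma GSeq_av110 {n m c : ℕ} (hc : c < m) : Avoids (GSeq n m 0 c) [1,1,0] := by
  rw [avoids110_iff]
  intro i j k hij hjk hE
  rw [Fin.lt_def] at hij hjk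
  simp only [GSeq] at hE ⊢
  split_ifs at hE ⊢ <;> omega

lemma GSeq_av021 {n m a : ℕ} (hm : 1 ≤ m) : Avoids (GSeq n m a 0) [0,2,1] := by
  rw [avoids021_iff]
  intro i j k hij hjk hE
  rw [Fin.lt_def] at hij hjk
  simp only [GSeq] at hE ⊢
  split_ifs at hE ⊢ <;> omega

lemma GSeq_av120 {n m a c : ℕ} (hc : c < m) (h2 : m ≤ c + 2) :
    Avoids (GSeq n m a c) [1,2,0] := by
  rw [avoids120_iff]
  intro i j k hij hjk hE
  rw [Fin.lt_def] at hij hjk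
  simp only [GSeq] at hE ⊢
  split_ifs at hE ⊢ <;> omega

/-- Least index where `e` deviates from the identity. -/
lemma least_dev {n : ℕ} (hn : 1 ≤ n) (e : Fin n → ℕ) (hI : InvSeq e) :
    ∃ m : ℕ, 1 ≤ m ∧ m ≤ n ∧ (∀ i : Fin n, (i : ℕ) < m → e i = (i : ℕ)) ∧
      (∀ h : m < n, e ⟨m, h⟩ ≠ m) := by
  classical
  set f : ℕ → ℕ := fun i => if h : i < n then e ⟨i, h⟩ else i + 1 with hf
  have hex : ∃ i, f i ≠ i := ⟨n, by simp [hf]⟩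
  set m := Nat.find hex with hm
  have hspec : f m ≠ m := Nat.find_spec hex
  have hmin : ∀ i, i < m → f i = i := by
    intro i hi
    have := Nat.find_min hex hi
    simpa using this
  have hmn : m ≤ n := by
    by_contra hc
    push_neg at hc
    have := hmin n hc
    simp [hf] at this
  have h0 : f 0 = 0 := by
    have h0n : 0 < n := hn
    have h1 : e ⟨0, h0n⟩ ≤ 0 := by simpa using hI ⟨0, h0n⟩
    simp only [hf, h0n, dif_pos]
    omega
  refine ⟨m, ?_, hmn, ?_, ?_⟩
  · rcases Nat.eq_zero_or_pos m with h | h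
    · rw [h] at hspec; exact absurd h0 hspec
    · exact h
  · intro i hi
    have := hmin i hi
    simp only [hf, i.isLt, dif_pos] at this
    simpa using this
  · intro h hc
    apply hspec
    simp only [hf, h, dif_pos]
    exact hc

/-- Least index `≥ m` where `e` differs from `v`. -/
lemma least_ge {n : ℕ} (e : Fin n → ℕ) (m v : ℕ) (hm : m ≤ n) :
    ∃ t : ℕ, m ≤ t ∧ t ≤ n ∧ (∀ i : Fin n, m ≤ (i : ℕ) → (i : ℕ) < t → e i = v) ∧
      (∀ h : t < n, e ⟨t, h⟩ ≠ v) := by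
  classical
  set f : ℕ → ℕ := fun i => if h : i < n then e ⟨i, h⟩ else v + 1 with hf
  have hex2 : ∃ i, m ≤ i ∧ f i ≠ v := ⟨n, hm, by simp [hf]⟩
  set t := Nat.find hex2 with ht
  have hspec : m ≤ t ∧ f t ≠ v := Nat.find_spec hex2
  have hmin : ∀ i, i < t → m ≤ i → f i = v := by
    intro i hi hmi
    have := Nat.find_min hex2 hi
    simp only [not_and, not_not] at this
    exact this hmi
  refine ⟨t, hspec.1, ?_, ?_, ?_⟩
  · by_contra hc
    push_neg at hc
    have := hmin n hc hm
    simp [hf] at this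
  · intro i h1 h2
    have := hmin i h2 h1
    simp only [hf, i.isLt, dif_pos] at this
    simpa using this
  · intro h hc
    apply hspec.2
    simp only [hf, h, dif_pos]
    exact hc
lemma fin_mk_lt_mk {n a b : ℕ} {ha : a < n} {hb : b < n} (h : a < b) :
    (⟨a, ha⟩ : Fin n) < ⟨b, hb⟩ := h
lemma fin_mk_lt {n a : ℕ} {ha : a < n} {k : Fin n} (h : a < (k : ℕ)) :
    (⟨a, ha⟩ : Fin n) < k := h
lemma fin_val_mk' {n a : ℕ} (h : a < n) : (((⟨a, h⟩ : Fin n)) : ℕ) = a := rfl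

lemma class110 {n : ℕ} (hn : 1 ≤ n) (e : Fin n → ℕ) (hI : InvSeq e)
    (h1 : ∀ i j k : Fin n, i < j → j < k → e i = e j → e k ≤ e i)
    (h2 : ∀ i j k : Fin n, i < j → j < k → e i = e j → e i ≤ e k) :
    ∃ m c, 1 ≤ m ∧ m ≤ n ∧ c < m ∧ (m = n → c = 0) ∧ e = GSeq n m 0 c := by
  obtain ⟨m, hm1, hmn, hlow, hdev⟩ := least_dev hn e hI
  rcases eq_or_lt_of_le hmn with heq | hlt
  · refine ⟨n, 0, hn, le_rfl, hn, fun _ => rfl, funext fun i => ?_⟩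
    have := hlow i (by rw [heq] at *; exact i.isLt)
    simp [GSeq, i.isLt, this]
  · set c := e ⟨m, hlt⟩ with hc
    have hcm : c < m := by
      have hub : c ≤ m := by simpa using hI ⟨m, hlt⟩
      have := hdev hlt
      omega
    have htail : ∀ k : Fin n, m ≤ (k : ℕ) → e k = c := by
      intro k hk
      rcases eq_or_lt_of_le hk with heq2 | hlt2
      · rw [hc]
        congr 1
        exact Fin.ext heq2.symm
      · have hcn : c < n := by omega
        have hec : e ⟨c, hcn⟩ = c := hlow ⟨c, hcn⟩ hcm
        have hEq : e ⟨c, hcn⟩ = e ⟨m, hlt⟩ := by rw [hec, hc]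
        have hlt1 : (⟨c, hcn⟩ : Fin n) < ⟨m, hlt⟩ := hcm
        have hlt2' : (⟨m, hlt⟩ : Fin n) < k := hlt2
        have hA := h1 ⟨c, hcn⟩ ⟨m, hlt⟩ k hlt1 hlt2' hEq
        have hB := h2 ⟨c, hcn⟩ ⟨m, hlt⟩ k hlt1 hlt2' hEq
        omega
    refine ⟨m, c, hm1, hmn, hcm, fun h => absurd h (by omega), funext fun i => ?_⟩
    simp only [GSeq]
    rcases lt_or_ge (i : ℕ) m with h | h
    · rw [hlow i h]; simp [h]
    · rw [htail i h]
      have : ¬ ((i : ℕ) < m) := by omega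
      simp [this]

lemma class021 {n : ℕ} (hn : 1 ≤ n) (e : Fin n → ℕ) (hI : InvSeq e)
    (h1 : ∀ i j k : Fin n, i < j → j < k → e i = e j → e k ≤ e i)
    (h2 : ∀ i j k : Fin n, i < j → j < k → e i < e k → e j ≤ e k) :
    e = GSeq n 1 (n-1) 0 ∨
      ∃ m a, 2 ≤ m ∧ m ≤ n ∧ a ≤ n - m ∧ e = GSeq n m a 0 := by
  obtain ⟨m, hm1, hmn, hlow, hdev⟩ := least_dev hn e hI
  -- helper to conclude from pointwise description
  rcases eq_or_lt_of_le hmn with heq | hmltn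
  · -- identity
    rcases Nat.lt_or_ge n 2 with hn1 | hn2
    · -- n = 1 : identity = zero
      left
      funext i
      have hi0 : (i : ℕ) = 0 := by have := i.isLt; omega
      have := hlow i (by omega)
      simp [GSeq, this, hi0]
    · right
      exact ⟨n, 0, hn2, le_rfl, by omega, funext fun i => by
        have := hlow i (by rw [heq] at *; exact i.isLt)
        simp [GSeq, i.isLt, this]⟩
  · set c := e ⟨m, hmltn⟩ with hc
    have hcm : c < m := by
      have hub : c ≤ m := by simpa using hI ⟨m, hmltn⟩
      have := hdev hmltn
      omega
    -- every entry at position > m is ≤ c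
    have hub2 : ∀ k : Fin n, m < (k : ℕ) → e k ≤ c := by
      intro k hk
      have hcn : c < n := by omega
      have hec : e ⟨c, hcn⟩ = c := hlow ⟨c, hcn⟩ hcm
      exact le_of_le_of_eq
        (h1 ⟨c, hcn⟩ ⟨m, hmltn⟩ k (show (c:ℕ) < m from hcm) hk (by rw [hec])) hec
    rcases Nat.lt_or_ge m 2 with hm2 | hm2
    · -- m = 1 : e is all zero
      left
      have hc0 : c = 0 := by omega
      funext i
      have hi : e i = 0 := by
        rcases Nat.lt_or_ge (i : ℕ) m with h | h
        · have := hlow i h; omega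
        · rcases eq_or_lt_of_le h with h' | h'
          · rw [hc] at hc0
            have : i = ⟨m, hmltn⟩ := Fin.ext h'.symm
            rw [this]; omega
          · have := hub2 i h'; omega
      simp only [GSeq]
      rw [hi]
      split_ifs <;> omega
    · -- 2 ≤ m < n
      -- tail values are 0 or ≥ m-1
      have hmem : ∀ k : Fin n, m ≤ (k : ℕ) → e k = 0 ∨ e k = m - 1 := by
        intro k hk
        have h0n : 0 < n := hn
        have hm1n : m - 1 < n := by omega
        have he0 : e ⟨0, h0n⟩ = 0 := by simpa using hI ⟨0, h0n⟩
        have hem1 : e ⟨m-1, hm1n⟩ = m - 1 := hlow ⟨m-1, hm1n⟩ (by exact (by omega : m - 1 < m))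
        have key : e ⟨0,h0n⟩ < e k → e ⟨m-1,hm1n⟩ ≤ e k :=
          h2 ⟨0,h0n⟩ ⟨m-1,hm1n⟩ k (fin_mk_lt_mk (by omega)) (fin_mk_lt (by omega))
        have hkc : e k ≤ c := by
          rcases eq_or_lt_of_le hk with h' | h'
          · have : k = ⟨m, hmltn⟩ := Fin.ext h'.symm
            rw [this]
          · exact hub2 k h'
        omega
      -- least index ≥ m where e ≠ m-1
      obtain ⟨t, htm, htn, hmid, htdev⟩ := least_ge e m (m-1) hmn
      have htail0 : ∀ k : Fin n, t ≤ (k : ℕ) → e k = 0 := by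
        intro k hk
        rcases Nat.lt_or_ge t n with htn' | htn'
        · have het : e ⟨t, htn'⟩ = 0 := by
            have := htdev htn'
            have := hmem ⟨t, htn'⟩ htm
            omega
          rcases eq_or_lt_of_le hk with h' | h'
          · have : k = ⟨t, htn'⟩ := Fin.ext h'.symm
            rw [this, het]
          · -- 0 repeats at positions 0 and t
            have h0n : 0 < n := hn
            have he0 : e ⟨0, h0n⟩ = 0 := by simpa using hI ⟨0, h0n⟩
            have := h1 ⟨0,h0n⟩ ⟨t,htn'⟩ k (fin_mk_lt_mk (by omega)) h' (by rw [he0, het])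
            omega
        · exact absurd (lt_of_le_of_lt hk k.isLt) (by omega)
      right
      refine ⟨m, t - m, hm2, hmn, by omega, funext fun i => ?_⟩
      simp only [GSeq]
      rcases Nat.lt_or_ge (i : ℕ) m with h | h
      · rw [hlow i h]; simp [h]
      · have hnm : ¬ ((i : ℕ) < m) := by omega
        rcases Nat.lt_or_ge (i : ℕ) t with h' | h'
        · rw [hmid i h h']
          have hlt2 : (i : ℕ) < m + (t - m) := by omega
          simp [hnm, hlt2]
        · rw [htail0 i h']
          have : ¬ ((i : ℕ) < m + (t - m)) := by omega
          simp [hnm, this]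

lemma class120 {n : ℕ} (hn : 1 ≤ n) (e : Fin n → ℕ) (hI : InvSeq e)
    (h1 : ∀ i j k : Fin n, i < j → j < k → e i = e j → e k ≤ e i)
    (h2 : ∀ i j k : Fin n, i < j → j < k → e k < e i → e j ≤ e i) :
    e = GSeq n 1 (n-1) 0 ∨
      ∃ m a, 2 ≤ m ∧ m ≤ n ∧ a ≤ n - m ∧ e = GSeq n m a (m-2) := by
  obtain ⟨m, hm1, hmn, hlow, hdev⟩ := least_dev hn e hI
  rcases eq_or_lt_of_le hmn with heq | hmltn
  · rcases Nat.lt_or_ge n 2 with hn1 | hn2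
    · left
      funext i
      have hi0 : (i : ℕ) = 0 := by have := i.isLt; omega
      have := hlow i (by omega)
      simp [GSeq, this, hi0]
    · right
      exact ⟨n, 0, hn2, le_rfl, by omega, funext fun i => by
        have := hlow i (by rw [heq] at *; exact i.isLt)
        simp [GSeq, i.isLt, this]⟩
  · set c := e ⟨m, hmltn⟩ with hc
    have hcm : c < m := by
      have hub : c ≤ m := by simpa using hI ⟨m, hmltn⟩
      have := hdev hmltn
      omega
    have hub2 : ∀ k : Fin n, m < (k : ℕ) → e k ≤ c := by
      intro k hk
      have hcn : c < n := by omega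
      have hec : e ⟨c, hcn⟩ = c := hlow ⟨c, hcn⟩ hcm
      exact le_of_le_of_eq
        (h1 ⟨c, hcn⟩ ⟨m, hmltn⟩ k (show (c:ℕ) < m from hcm) hk (by rw [hec])) hec
    rcases Nat.lt_or_ge m 2 with hm2 | hm2
    · left
      have hc0 : c = 0 := by omega
      funext i
      have hi : e i = 0 := by
        rcases Nat.lt_or_ge (i : ℕ) m with h | h
        · have := hlow i h; omega
        · rcases eq_or_lt_of_le h with h' | h'
          · rw [hc] at hc0
            have : i = ⟨m, hmltn⟩ := Fin.ext h'.symm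
            rw [this]; omega
          · have := hub2 i h'; omega
      simp only [GSeq]
      rw [hi]
      split_ifs <;> omega
    · -- 2 ≤ m < n : lower bound m-2 on the tail
      have hlb : ∀ k : Fin n, m - 1 < (k : ℕ) → m - 2 ≤ e k := by
        intro k hk
        have hm2n : m - 2 < n := by omega
        have hm1n : m - 1 < n := by omega
        have he2 : e ⟨m-2, hm2n⟩ = m - 2 := hlow ⟨m-2, hm2n⟩ (by exact (by omega : m - 2 < m))
        have he1 : e ⟨m-1, hm1n⟩ = m - 1 := hlow ⟨m-1, hm1n⟩ (by exact (by omega : m - 1 < m))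
        have key : e k < e ⟨m-2,hm2n⟩ → e ⟨m-1,hm1n⟩ ≤ e ⟨m-2,hm2n⟩ :=
          h2 ⟨m-2,hm2n⟩ ⟨m-1,hm1n⟩ k (fin_mk_lt_mk (by omega)) (fin_mk_lt (by omega))
        omega
      obtain ⟨t, htm, htn, hmid, htdev⟩ := least_ge e m (m-1) hmn
      have htail2 : ∀ k : Fin n, t ≤ (k : ℕ) → e k = m - 2 := by
        intro k hk
        rcases Nat.lt_or_ge t n with htn' | htn'
        · have het : e ⟨t, htn'⟩ = m - 2 := by
            have hd := htdev htn'
            have hl := hlb ⟨t, htn'⟩ (by exact (by omega : m - 1 < t))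
            have hu : e ⟨t, htn'⟩ ≤ c := by
              rcases eq_or_lt_of_le htm with h' | h'
              · have : (⟨t, htn'⟩ : Fin n) = ⟨m, hmltn⟩ := Fin.ext h'.symm
                rw [this]
              · exact hub2 ⟨t, htn'⟩ h'
            omega
          rcases eq_or_lt_of_le hk with h' | h'
          · have : k = ⟨t, htn'⟩ := Fin.ext h'.symm
            rw [this, het]
          · have hm2n : m - 2 < n := by omega
            have he2 : e ⟨m-2, hm2n⟩ = m - 2 := hlow ⟨m-2, hm2n⟩ (by exact (by omega : m - 2 < m))
            have hA := h1 ⟨m-2,hm2n⟩ ⟨t,htn'⟩ k (fin_mk_lt_mk (by omega)) h'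
              (by rw [he2, het])
            have hB := hlb k (by omega)
            omega
        · exact absurd (lt_of_le_of_lt hk k.isLt) (by omega)
      right
      refine ⟨m, t - m, hm2, hmn, by omega, funext fun i => ?_⟩
      simp only [GSeq]
      rcases Nat.lt_or_ge (i : ℕ) m with h | h
      · rw [hlow i h]; simp [h]
      · have hnm : ¬ ((i : ℕ) < m) := by omega
        rcases Nat.lt_or_ge (i : ℕ) t with h' | h'
        · rw [hmid i h h']
          have hlt2 : (i : ℕ) < m + (t - m) := by omega
          simp [hnm, hlt2]
        · rw [htail2 i h']
          have : ¬ ((i : ℕ) < m + (t - m)) := by omega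
          simp [hnm, this]
lemma GSeq_inj1 {n m c m' c' : ℕ} (hc : c < m) (hmn : m ≤ n) (h0 : m = n → c = 0)
    (hc' : c' < m') (hmn' : m' ≤ n) (h0' : m' = n → c' = 0)
    (h : GSeq n m 0 c = GSeq n m' 0 c') : m = m' ∧ c = c' := by
  have key : ∀ (x : ℕ) (hx : x < n),
      GSeq n m 0 c ⟨x, hx⟩ = GSeq n m' 0 c' ⟨x, hx⟩ := fun x hx => congrFun h _
  have hmm : m = m' := by
    rcases Nat.lt_trichotomy m m' with hlt | heq | hlt
    · exfalso
      have := key m (by omega)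
      simp only [GSeq, fin_val_mk'] at this
      split_ifs at this <;> omega
    · exact heq
    · exfalso
      have := key m' (by omega)
      simp only [GSeq, fin_val_mk'] at this
      split_ifs at this <;> omega
  subst hmm
  refine ⟨rfl, ?_⟩
  rcases Nat.lt_or_ge m n with hlt | hge
  · have := key m hlt
    simp only [GSeq, fin_val_mk'] at this
    split_ifs at this <;> omega
  · have : m = n := by omega
    rw [h0 this, h0' this]

lemma GSeq_inj2 {n m a c m' a' c' : ℕ} (hm : 2 ≤ m) (ha : m + a ≤ n) (hc : c + 1 < m)
    (hm' : 2 ≤ m') (ha' : m' + a' ≤ n) (hc' : c' + 1 < m')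
    (h : GSeq n m a c = GSeq n m' a' c') : m = m' ∧ a = a' := by
  have key : ∀ (x : ℕ) (hx : x < n),
      GSeq n m a c ⟨x, hx⟩ = GSeq n m' a' c' ⟨x, hx⟩ := fun x hx => congrFun h _
  have hmm : m = m' := by
    rcases Nat.lt_trichotomy m m' with hlt | heq | hlt
    · exfalso
      have := key m (by omega)
      simp only [GSeq, fin_val_mk'] at this
      split_ifs at this <;> omega
    · exact heq
    · exfalso
      have := key m' (by omega)
      simp only [GSeq, fin_val_mk'] at this
      split_ifs at this <;> omega
  subst hmm
  refine ⟨rfl, ?_⟩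
  rcases Nat.lt_trichotomy a a' with hlt | heq | hlt
  · exfalso
    have := key (m + a) (by omega)
    simp only [GSeq, fin_val_mk'] at this
    split_ifs at this <;> omega
  · exact heq
  · exfalso
    have := key (m + a') (by omega)
    simp only [GSeq, fin_val_mk'] at this
    split_ifs at this <;> omega

lemma gauss (n : ℕ) : ∑ m ∈ Finset.range n, m = n * (n - 1) / 2 := by
  have := Finset.sum_range_id_mul_two n
  omega

lemma count_helper {n : ℕ} (P : (Fin n → ℕ) → Prop) (S : Finset (Fin n → ℕ))
    (h : ∀ e, P e ↔ e ∈ S) : Nat.card {e : Fin n → ℕ // P e} = S.card := by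
  rw [Nat.card_congr (Equiv.subtypeEquivRight h), Nat.card_eq_finsetCard]

lemma count110 {n : ℕ} (hn : 1 ≤ n) :
    Nat.card {e : Fin n → ℕ //
        InvSeq e ∧ Avoids e [0,0,1] ∧ Avoids e [1,1,0]} = n * (n - 1) / 2 + 1 := by
  classical
  set P1 : Finset (Σ _ : ℕ, ℕ) :=
    insert ⟨n, 0⟩ ((Finset.range n).sigma fun m => Finset.range m) with hP1
  have hmemP1 : ∀ p : Σ _ : ℕ, ℕ, p ∈ P1 ↔
      (p = ⟨n, 0⟩ ∨ (p.1 < n ∧ p.2 < p.1)) := by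
    intro p
    simp [hP1, Finset.mem_sigma]
  have hcon : ∀ p : Σ _ : ℕ, ℕ, p ∈ P1 →
      p.2 < p.1 ∧ p.1 ≤ n ∧ (p.1 = n → p.2 = 0) := by
    intro p hp
    rcases (hmemP1 p).1 hp with h | h
    · subst h; exact ⟨hn, le_rfl, fun _ => rfl⟩
    · exact ⟨h.2, le_of_lt h.1, fun he => by omega⟩
  set S1 : Finset (Fin n → ℕ) := P1.image fun p => GSeq n p.1 0 p.2 with hS1
  have hiff : ∀ e : Fin n → ℕ,
      (InvSeq e ∧ Avoids e [0,0,1] ∧ Avoids e [1,1,0]) ↔ e ∈ S1 := by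
    intro e
    constructor
    · rintro ⟨hI, ha, hb⟩
      rw [avoids001_iff] at ha
      rw [avoids110_iff] at hb
      obtain ⟨m, c, h1, h2, h3, h4, h5⟩ := class110 hn e hI ha hb
      rw [hS1, Finset.mem_image]
      refine ⟨⟨m, c⟩, ?_, h5.symm⟩
      rw [hmemP1]
      rcases Nat.lt_or_ge m n with hlt | hge
      · right; exact ⟨hlt, h3⟩
      · left
        have hmn : m = n := by omega
        have := h4 hmn
        subst hmn; subst this; rfl
    · intro he
      rw [hS1, Finset.mem_image] at he
      obtain ⟨p, hp, hEq⟩ := he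
      obtain ⟨hc, hmn, -⟩ := hcon p hp
      exact hEq ▸ ⟨GSeq_inv hc, GSeq_av001 hc, GSeq_av110 hc⟩
  rw [count_helper _ S1 hiff, hS1]
  rw [Finset.card_image_of_injOn]
  · rw [hP1, Finset.card_insert_of_notMem]
    · rw [Finset.card_sigma]
      simp only [Finset.card_range]
      rw [gauss]
    · intro hmem
      rw [Finset.mem_sigma] at hmem
      simp at hmem
  · intro p hp q hq hEq
    obtain ⟨h1, h2, h3⟩ := hcon p (by simpa using hp)
    obtain ⟨h4, h5, h6⟩ := hcon q (by simpa using hq)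
    obtain ⟨ha, hb⟩ := GSeq_inj1 h1 h2 h3 h4 h5 h6 hEq
    rcases p with ⟨pm, pc⟩
    rcases q with ⟨qm, qc⟩
    simp only at ha hb
    subst ha; subst hb; rfl

lemma range_sum (n : ℕ) (hn : 1 ≤ n) :
    ∑ j ∈ Finset.range (n - 1), (j + 1) = n * (n - 1) / 2 := by
  have h1 : ∑ j ∈ Finset.range n, j = ∑ j ∈ Finset.range (n-1), (j+1) + 0 := by
    have h2 : n = (n - 1) + 1 := by omega
    conv_lhs => rw [h2, Finset.sum_range_succ']
  rw [← gauss n]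
  omega
lemma count021 {n : ℕ} (hn : 1 ≤ n) :
    Nat.card {e : Fin n → ℕ //
        InvSeq e ∧ Avoids e [0,0,1] ∧ Avoids e [0,2,1]} = n * (n - 1) / 2 + 1 := by
  classical
  set P2 : Finset (Σ _ : ℕ, ℕ) :=
    (Finset.range (n-1)).sigma fun j => Finset.range (j+1) with hP2
  have hmem : ∀ p : Σ _ : ℕ, ℕ, p ∈ P2 ↔ p.1 < n - 1 ∧ p.2 ≤ p.1 := by
    intro p
    simp [hP2, Finset.mem_sigma, Nat.lt_succ_iff]
  set S2 : Finset (Fin n → ℕ) :=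
    insert (GSeq n 1 (n-1) 0) (P2.image fun p => GSeq n (n - p.1) p.2 0) with hS2
  have hiff : ∀ e : Fin n → ℕ,
      (InvSeq e ∧ Avoids e [0,0,1] ∧ Avoids e [0,2,1]) ↔ e ∈ S2 := by
    intro e
    constructor
    · rintro ⟨hI, ha, hb⟩
      rw [avoids001_iff] at ha
      rw [avoids021_iff] at hb
      rw [hS2, Finset.mem_insert]
      rcases class021 hn e hI ha hb with h | ⟨m, a, hm2, hmn, hamn, he⟩
      · left; exact h
      · right
        rw [Finset.mem_image]
        refine ⟨⟨n - m, a⟩, ?_, ?_⟩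
        · rw [hmem]; constructor <;> simp <;> omega
        · have hr : n - (n - m) = m := by omega
          simp only [hr]
          exact he.symm
    · intro he
      rw [hS2, Finset.mem_insert] at he
      rcases he with he | he
      · subst he
        exact ⟨GSeq_inv (by omega), GSeq_av001 (by omega), GSeq_av021 le_rfl⟩
      · rw [Finset.mem_image] at he
        obtain ⟨p, hp, hEq⟩ := he
        rw [hmem] at hp
        have hm2 : 2 ≤ n - p.1 := by omega
        exact hEq ▸ ⟨GSeq_inv (by omega), GSeq_av001 (by omega), GSeq_av021 (by omega)⟩
  rw [count_helper _ S2 hiff, hS2]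
  rw [Finset.card_insert_of_notMem, Finset.card_image_of_injOn]
  · rw [hP2, Finset.card_sigma]
    simp only [Finset.card_range]
    rw [range_sum n hn]
  · intro p hp q hq hEq
    rw [Finset.mem_coe, hmem] at hp hq
    obtain ⟨ha, hb⟩ := GSeq_inj2 (by omega) (by omega) (by omega)
      (by omega) (by omega) (by omega) hEq
    rcases p with ⟨pm, pa⟩
    rcases q with ⟨qm, qa⟩
    simp only at ha hb hp hq
    have : pm = qm := by omega
    subst this; subst hb; rfl
  · intro hmem2
    rw [Finset.mem_image] at hmem2
    obtain ⟨p, hp, hEq⟩ := hmem2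
    rw [hmem] at hp
    have h2n : 2 ≤ n := by omega
    have := congrFun hEq ⟨1, by omega⟩
    simp only [GSeq, fin_val_mk'] at this
    split_ifs at this <;> omega

lemma count120 {n : ℕ} (hn : 1 ≤ n) :
    Nat.card {e : Fin n → ℕ //
        InvSeq e ∧ Avoids e [0,0,1] ∧ Avoids e [1,2,0]} = n * (n - 1) / 2 + 1 := by
  classical
  set P2 : Finset (Σ _ : ℕ, ℕ) :=
    (Finset.range (n-1)).sigma fun j => Finset.range (j+1) with hP2
  have hmem : ∀ p : Σ _ : ℕ, ℕ, p ∈ P2 ↔ p.1 < n - 1 ∧ p.2 ≤ p.1 := by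
    intro p
    simp [hP2, Finset.mem_sigma, Nat.lt_succ_iff]
  set S2 : Finset (Fin n → ℕ) :=
    insert (GSeq n 1 (n-1) 0)
      (P2.image fun p => GSeq n (n - p.1) p.2 (n - p.1 - 2)) with hS2
  have hiff : ∀ e : Fin n → ℕ,
      (InvSeq e ∧ Avoids e [0,0,1] ∧ Avoids e [1,2,0]) ↔ e ∈ S2 := by
    intro e
    constructor
    · rintro ⟨hI, ha, hb⟩
      rw [avoids001_iff] at ha
      rw [avoids120_iff] at hb
      rw [hS2, Finset.mem_insert]
      rcases class120 hn e hI ha hb with h | ⟨m, a, hm2, hmn, hamn, he⟩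
      · left; exact h
      · right
        rw [Finset.mem_image]
        refine ⟨⟨n - m, a⟩, ?_, ?_⟩
        · rw [hmem]; constructor <;> simp <;> omega
        · have hr : n - (n - m) = m := by omega
          simp only [hr]
          exact he.symm
    · intro he
      rw [hS2, Finset.mem_insert] at he
      rcases he with he | he
      · subst he
        exact ⟨GSeq_inv (by omega), GSeq_av001 (by omega),
          GSeq_av120 (by omega) (by omega)⟩
      · rw [Finset.mem_image] at he
        obtain ⟨p, hp, hEq⟩ := he
        rw [hmem] at hp
        have hm2 : 2 ≤ n - p.1 := by omega
        exact hEq ▸ ⟨GSeq_inv (by omega), GSeq_av001 (by omega),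
          GSeq_av120 (by omega) (by omega)⟩
  rw [count_helper _ S2 hiff, hS2]
  rw [Finset.card_insert_of_notMem, Finset.card_image_of_injOn]
  · rw [hP2, Finset.card_sigma]
    simp only [Finset.card_range]
    rw [range_sum n hn]
  · intro p hp q hq hEq
    rw [Finset.mem_coe, hmem] at hp hq
    obtain ⟨ha, hb⟩ := GSeq_inj2 (by omega) (by omega) (by omega)
      (by omega) (by omega) (by omega) hEq
    rcases p with ⟨pm, pa⟩
    rcases q with ⟨qm, qa⟩
    simp only at ha hb hp hq
    have : pm = qm := by omega
    subst this; subst hb; rfl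
  · intro hmem2
    rw [Finset.mem_image] at hmem2
    obtain ⟨p, hp, hEq⟩ := hmem2
    rw [hmem] at hp
    have h2n : 2 ≤ n := by omega
    have := congrFun hEq ⟨1, by omega⟩
    simp only [GSeq, fin_val_mk'] at this
    split_ifs at this <;> omega


theorem stmt_1 (n : ℕ) (hn : 1 ≤ n) (p q : List ℕ)
    (hpq : (p, q) = ([0,0,1], [1,1,0]) ∨ (p, q) = ([0,0,1], [0,2,1]) ∨
           (p, q) = ([0,0,1], [1,2,0])) :
    Nat.card {e : Fin n → ℕ // InvSeq e ∧ Avoids e p ∧ Avoids e q}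
      = n * (n - 1) / 2 + 1 := by
  rcases hpq with h | h | h <;>
    rw [Prod.ext_iff] at h <;>
    obtain ⟨hp, hq⟩ := h <;>
    subst hp <;> subst hq
  · exact count110 hn
  · exact count021 hn
  · exact count120 hn
end
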